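/- For the root-finding step of the FLRS decoder, the dimension d_RF of the F_{q^m}-solution space of the root-finding system satisfies d_RF ≤ s − 1, hence the list of candidate message polynomials has size at most q^{m(s−1)}. -/
import Mathlib


/-- For the root-finding step of the FLRS decoder: the solution space of the
root-finding system has dimension `d_RF ≤ s − 1`, hence the list of candidate
message polynomials has size at most `q^{m(s−1)}`.  The root-finding matrix is
block lower triangular with `k` block columns; its diagonal blocks are the vectors
whose entries are (up to the automorphism) the evaluations of the polynomials
`B₀⁽ᵘ⁾` (the first one nonzero, all of degree ≤ s−1) at the pairwise distinct
points `σ^a(γ)`. -/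
theorem stmt_13 (q m : ℕ) (hq : IsPrimePow q) (hm : 0 < m)
    (F : Type*) [Field F] [Fintype F] (hcard : Fintype.card F = q ^ m)
    (σ : F ≃+* F) (γ : F)
    (s k dI : ℕ) (hs : 1 ≤ s) (hk : 1 ≤ k) (hdI : 1 ≤ dI)
    (hdist : ∀ a b : ℕ, a < k → b < k → a ≠ b → (⇑σ)^[a] γ ≠ (⇑σ)^[b] γ)
    (B₀ : Fin dI → Polynomial F)
    (hB₀ne : B₀ ⟨0, hdI⟩ ≠ 0)
    (hB₀deg : ∀ u, (B₀ u).natDegree ≤ s - 1)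
    (Bmat : Matrix (Fin k × Fin dI) (Fin k) F)
    (htri : ∀ (a : Fin k) (u : Fin dI) (c : Fin k), a < c → Bmat (a, u) c = 0)
    (hdiag : ∀ (a : Fin k) (u : Fin dI),
      Bmat (a, u) a = (⇑σ.symm)^[a.1] ((B₀ u).eval ((⇑σ)^[a.1] γ))) :
    Module.finrank F (LinearMap.ker Bmat.mulVecLin) ≤ s - 1 ∧
    ∀ qv : Fin k × Fin dI → F,
      Nat.card {f : Fin k → F // Bmat.mulVec f = qv} ≤ q ^ (m * (s - 1)) := by
  classical
  set P : Polynomial F := B₀ ⟨0, hdI⟩ with hP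
  -- iterates of σ.symm vanish only at 0
  have h0 : ∀ n : ℕ, (⇑σ.symm)^[n] (0 : F) = 0 := by
    intro n
    induction n with
    | zero => simp
    | succ n ih => rw [Function.iterate_succ_apply, map_zero, ih]
  have hiter : ∀ (n : ℕ) (x : F), (⇑σ.symm)^[n] x = 0 ↔ x = 0 := by
    intro n x
    constructor
    · intro h
      have hinj : Function.Injective ((⇑σ.symm)^[n]) :=
        Function.Injective.iterate σ.symm.injective n
      exact hinj (by rw [h, h0])
    · intro h
      rw [h, h0]
  -- the "bad" set of rows where the diagonal of the first block vanishes
  set S : Finset (Fin k) := Finset.univ.filter (fun a => P.eval ((⇑σ)^[a.1] γ) = 0) with hS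
  have hScard : S.card ≤ s - 1 := by
    have hinj : Set.InjOn (fun a : Fin k => (⇑σ)^[a.1] γ) S := by
      intro a _ b _ hab
      by_contra hne
      exact hdist a.1 b.1 a.isLt b.isLt (fun h => hne (Fin.ext h)) hab
    have hmap : S.card = (S.image (fun a : Fin k => (⇑σ)^[a.1] γ)).card :=
      (Finset.card_image_of_injOn hinj).symm
    have hsub : S.image (fun a : Fin k => (⇑σ)^[a.1] γ) ⊆ P.roots.toFinset := by
      intro x hx
      simp only [Finset.mem_image] at hx
      obtain ⟨a, ha, rfl⟩ := hx
      rw [Multiset.mem_toFinset, Polynomial.mem_roots hB₀ne]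
      exact (Finset.mem_filter.mp ha).2
    calc S.card = _ := hmap
      _ ≤ P.roots.toFinset.card := Finset.card_le_card hsub
      _ ≤ Multiset.card P.roots := Multiset.toFinset_card_le _
      _ ≤ P.natDegree := Polynomial.card_roots' P
      _ ≤ s - 1 := hB₀deg _
  -- kernel elements vanishing on S are zero (strong induction)
  have hker0 : ∀ f : Fin k → F, Bmat.mulVecLin f = 0 →
      (∀ a ∈ S, f a = 0) → f = 0 := by
    intro f hf hfS
    have key : ∀ n : ℕ, ∀ a : Fin k, a.1 < n → f a = 0 := by
      intro n
      induction n with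
      | zero => intro a h; omega
      | succ n ihn =>
      intro a han
      rcases Nat.lt_or_ge a.1 n with hlt | hge
      · exact ihn a hlt
      have ih : ∀ c : Fin k, c < a → f c = 0 := fun c hc => ihn c (by omega)
      by_cases haS : a ∈ S
      · exact hfS a haS
      · have heq : ∑ c, Bmat (a, ⟨0, hdI⟩) c * f c = 0 := by
          have := congrFun hf (a, ⟨0, hdI⟩)
          simpa [Matrix.mulVecLin, Matrix.mulVec, dotProduct] using this
        have hsum : ∑ c, Bmat (a, ⟨0, hdI⟩) c * f c
            = Bmat (a, ⟨0, hdI⟩) a * f a := by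
          apply Finset.sum_eq_single
          · intro c _ hc
            rcases lt_or_gt_of_ne hc with h | h
            · rw [ih c h, mul_zero]
            · rw [htri a _ c h, zero_mul]
          · intro h; exact absurd (Finset.mem_univ a) h
        have hdne : Bmat (a, ⟨0, hdI⟩) a ≠ 0 := by
          rw [hdiag]
          intro h
          exact haS (Finset.mem_filter.mpr ⟨Finset.mem_univ a, (hiter _ _).mp h⟩)
        have := hsum ▸ heq
        simpa [Pi.zero_apply] using (mul_eq_zero.mp this).resolve_left hdne
    funext a
    exact key (a.1 + 1) a (Nat.lt_succ_self _)
  -- the restriction map from the kernel to functions on S is injective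
  let L : (LinearMap.ker Bmat.mulVecLin) →ₗ[F] ({a : Fin k // a ∈ S} → F) :=
    (LinearMap.funLeft F F (fun a : {a : Fin k // a ∈ S} => (a : Fin k))).comp
      (Submodule.subtype _)
  have hLinj : Function.Injective L := by
    rw [← LinearMap.ker_eq_bot, LinearMap.ker_eq_bot']
    intro x hx
    ext
    have := hker0 x.1 x.2 (fun a ha => congrFun hx ⟨a, ha⟩)
    simp [this]
  have hdim : Module.finrank F (LinearMap.ker Bmat.mulVecLin) ≤ s - 1 := by
    have h1 := LinearMap.finrank_le_finrank_of_injective hLinj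
    have h2 : Module.finrank F ({a : Fin k // a ∈ S} → F) = S.card := by
      rw [Module.finrank_pi F]
      simp
    omega
  refine ⟨hdim, fun qv => ?_⟩
  rcases isEmpty_or_nonempty {f : Fin k → F // Bmat.mulVec f = qv} with h | h
  · simp [Nat.card_of_isEmpty]
  · obtain ⟨⟨f₀, hf₀⟩⟩ := h
    have hequiv : {f : Fin k → F // Bmat.mulVec f = qv} ≃
        (LinearMap.ker Bmat.mulVecLin) := by
      refine ⟨fun f => ⟨f.1 - f₀, ?_⟩, fun g => ⟨g.1 + f₀, ?_⟩, fun f => by simp, fun g => by simp⟩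
      · rw [LinearMap.mem_ker, Matrix.mulVecLin_apply, Matrix.mulVec_sub, f.2, hf₀, sub_self]
      · have := g.2
        rw [LinearMap.mem_ker, Matrix.mulVecLin_apply] at this
        rw [Matrix.mulVec_add, this, hf₀, zero_add]
    rw [Nat.card_congr hequiv, Nat.card_eq_fintype_card,
      Module.card_eq_pow_finrank (K := F), hcard, ← pow_mul]
    have hq1 : 1 ≤ q := hq.one_lt.le
    exact Nat.pow_le_pow_right hq1 (Nat.mul_le_mul_left m hdim)
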